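/- Let (Z,η) be a Lebesgue probability space and let Q be a measure-preserving Markov operator on L¹(Z,η) satisfying Assumption (A2) (with decomposition Q = VW, Q* = WV) and Assumption (A5) (with constants C, K, a, b, n₀ and operators A_n), and assume that Q is mixing: ∫_Z (Q^n φ)·ψ̄ dη → (∫_Z φ dη)(∫_Z ψ̄ dη) for all φ, ψ ∈ L²(Z,η). Then for all nonnegative φ, ψ ∈ L^∞(Z,η) with ∫_Z φ dη = ∫_Z ψ dη = 1 one has liminf_{n→∞} Σ_{j=−b}^{b} ⟨Q^{n+j} φ, Q^{n} ψ⟩_{L²(Z,η)} ≥ 1/C; in particular, no such pair φ, ψ satisfies limsup_{n→∞} Σ_{j=−b}^{b} ⟨Q^{n+j} φ, Q^{n} ψ⟩ < ε whenever ε < 1/C. -/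

import Mathlib

open MeasureTheory Filter ENNReal Topology

noncomputable section

/-- The constant function `1` as an element of `L¹(Z,η)`. -/
def oneL1 {Z : Type*} [MeasurableSpace Z] (η : Measure Z) [IsFiniteMeasure η] : Lp ℝ 1 η :=
  MemLp.toLp (fun _ => (1 : ℝ)) (memLp_const 1)

/-- A measure-preserving Markov operator on `L¹(Z,η)`: positive, fixes the constants,
and preserves the integral. -/
def IsMarkovOp {Z : Type*} [MeasurableSpace Z] (η : Measure Z) [IsFiniteMeasure η]
    (Q : Lp ℝ 1 η →ₗ[ℝ] Lp ℝ 1 η) : Prop :=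
  (∀ φ : Lp ℝ 1 η, 0 ≤ φ → 0 ≤ Q φ) ∧
  Q (oneL1 η) = oneL1 η ∧
  ∀ φ : Lp ℝ 1 η, ∫ z, (Q φ : Z → ℝ) z ∂η = ∫ z, (φ : Z → ℝ) z ∂η

/-- `Qs` agrees on `L²(Z,η)` with the Hilbert-space adjoint of the restriction of `Q` to `L²`. -/
def MarkovAdjoint {Z : Type*} [MeasurableSpace Z] (η : Measure Z) [IsFiniteMeasure η]
    (Q Qs : Lp ℝ 1 η →ₗ[ℝ] Lp ℝ 1 η) : Prop :=
  ∀ φ ψ : Lp ℝ 1 η, MemLp (φ : Z → ℝ) 2 η → MemLp (ψ : Z → ℝ) 2 η →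
    ∫ z, (Q φ : Z → ℝ) z * (ψ : Z → ℝ) z ∂η
      = ∫ z, (φ : Z → ℝ) z * (Qs ψ : Z → ℝ) z ∂η

section Aux

variable {Z : Type*} [MeasurableSpace Z] {η : Measure Z} [IsProbabilityMeasure η]

lemma oneL1_coe : (oneL1 η : Z → ℝ) =ᵐ[η] fun _ => (1:ℝ) := MemLp.coeFn_toLp _

lemma smul_oneL1_coe (c : ℝ) : ((c • oneL1 η : Lp ℝ 1 η) : Z → ℝ) =ᵐ[η] fun _ => c := by
  filter_upwards [Lp.coeFn_smul c (oneL1 η), oneL1_coe] with z h1 h2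
  simp [h1, h2]

/-- A Markov operator is monotone. -/
lemma markov_mono {M : Lp ℝ 1 η →ₗ[ℝ] Lp ℝ 1 η} (hM : IsMarkovOp η M)
    {f g : Lp ℝ 1 η} (h : f ≤ g) : M f ≤ M g := by
  have := hM.1 (g - f) (by simpa [sub_nonneg] using h)
  rw [map_sub] at this
  simpa [sub_nonneg] using this

/-- A Markov operator preserves the bound `φ ≤ c • 1`. -/
lemma markov_bdd {M : Lp ℝ 1 η →ₗ[ℝ] Lp ℝ 1 η} (hM : IsMarkovOp η M)
    {f : Lp ℝ 1 η} {c : ℝ} (h : f ≤ c • oneL1 η) : M f ≤ c • oneL1 η := by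
  have := markov_mono hM h
  rwa [LinearMap.map_smul, hM.2.1] at this

lemma markov_comp {M N : Lp ℝ 1 η →ₗ[ℝ] Lp ℝ 1 η} (hM : IsMarkovOp η M)
    (hN : IsMarkovOp η N) : IsMarkovOp η (M ∘ₗ N) := by
  refine ⟨fun f hf => hM.1 _ (hN.1 _ hf), ?_, fun f => ?_⟩
  · simp [LinearMap.comp_apply, hN.2.1, hM.2.1]
  · simp [LinearMap.comp_apply, hM.2.2, hN.2.2]

lemma markov_pow {M : Lp ℝ 1 η →ₗ[ℝ] Lp ℝ 1 η} (hM : IsMarkovOp η M) :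
    ∀ n : ℕ, IsMarkovOp η (M ^ n) := by
  intro n
  induction n with
  | zero => exact ⟨fun f hf => by simpa using hf, by simp [oneL1], fun f => by simp⟩
  | succ n ih =>
      have : (M ^ (n+1)) = M ∘ₗ (M ^ n) := by
        rw [pow_succ']; rfl
      rw [this]; exact markov_comp hM ih

/-- a.e. bounds from the `Lp` order relations. -/
lemma ae_bounds {f : Lp ℝ 1 η} {c : ℝ} (h0 : 0 ≤ f) (hc : f ≤ c • oneL1 η) :
    ∀ᵐ z ∂η, 0 ≤ (f : Z → ℝ) z ∧ (f : Z → ℝ) z ≤ c := by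
  have h1 : (0 : Lp ℝ 1 η) ≤ᵐ[η] f := (Lp.coeFn_le _ _).2 h0
  have h2 : f ≤ᵐ[η] (c • oneL1 η : Lp ℝ 1 η) := (Lp.coeFn_le _ _).2 hc
  filter_upwards [h1, h2, smul_oneL1_coe (η := η) c, Lp.coeFn_zero ℝ 1 η] with z hz1 hz2 hz3 hz4
  constructor
  · simpa [hz4] using hz1
  · simpa [hz3] using hz2

lemma mem2_of_bdd {f : Lp ℝ 1 η} {c : ℝ} (h0 : 0 ≤ f) (hc : f ≤ c • oneL1 η) :
    MemLp (f : Z → ℝ) 2 η := by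
  refine MemLp.of_bound (Lp.aestronglyMeasurable f) |c| ?_
  filter_upwards [ae_bounds h0 hc] with z hz
  rw [Real.norm_eq_abs, abs_of_nonneg hz.1]
  exact hz.2.trans (le_abs_self c)

lemma exists_bdd_of_top {f : Lp ℝ 1 η} (h0 : 0 ≤ f) (htop : MemLp (f : Z → ℝ) ∞ η) :
    ∃ c : ℝ, 0 ≤ c ∧ f ≤ c • oneL1 η := by
  have hfin : eLpNormEssSup (f : Z → ℝ) η < ∞ := by
    have := htop.2; rwa [eLpNorm_exponent_top] at this
  refine ⟨(eLpNormEssSup (f : Z → ℝ) η).toReal, ENNReal.toReal_nonneg, ?_⟩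
  rw [← Lp.coeFn_le]
  filter_upwards [ae_le_eLpNormEssSup (f := (f : Z → ℝ)) (μ := η),
    smul_oneL1_coe (η := η) (eLpNormEssSup (f : Z → ℝ) η).toReal] with z hz h1
  rw [h1]
  calc (f : Z → ℝ) z ≤ ‖(f : Z → ℝ) z‖ := Real.le_norm_self _
    _ ≤ (eLpNormEssSup (f : Z → ℝ) η).toReal := by
        rw [← ENNReal.coe_toNNReal hfin.ne] at hz
        exact_mod_cast hz

end Aux

section Aux2

variable {Z : Type*} [MeasurableSpace Z] {η : Measure Z} [IsProbabilityMeasure η]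

lemma markov_pow_integral {M : Lp ℝ 1 η →ₗ[ℝ] Lp ℝ 1 η} (hM : IsMarkovOp η M)
    (f : Lp ℝ 1 η) : ∀ n : ℕ, ∫ z, ((M ^ n) f : Z → ℝ) z ∂η = ∫ z, (f : Z → ℝ) z ∂η := by
  intro n
  induction n with
  | zero => simp
  | succ n ih =>
      have h : (M ^ (n+1)) f = M ((M ^ n) f) := by rw [pow_succ']; rfl
      rw [h, hM.2.2, ih]

lemma integrable_coe (f : Lp ℝ 1 η) : Integrable (f : Z → ℝ) η := L1.integrable_coeFn f

/-- product of an `L¹` function with an a.e.-bounded function is integrable -/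
lemma integrable_mul_bdd (f : Lp ℝ 1 η) {g : Lp ℝ 1 η} {c : ℝ} (hg0 : 0 ≤ g)
    (hgc : g ≤ c • oneL1 η) : Integrable (fun z => (f : Z → ℝ) z * (g : Z → ℝ) z) η := by
  have hb : ∀ᵐ z ∂η, ‖(g : Z → ℝ) z‖ ≤ |c| := by
    filter_upwards [ae_bounds hg0 hgc] with z hz
    rw [Real.norm_eq_abs, abs_of_nonneg hz.1]
    exact hz.2.trans (le_abs_self c)
  have := Integrable.bdd_mul (c := |c|) (integrable_coe f) (Lp.aestronglyMeasurable g) hb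
  simpa [mul_comm] using this

/-- coercion of a finite sum in Lp -/
lemma coeFn_sum {ι : Type*} (s : Finset ι) (F : ι → Lp ℝ 1 η) :
    ((∑ j ∈ s, F j : Lp ℝ 1 η) : Z → ℝ) =ᵐ[η] fun z => ∑ j ∈ s, (F j : Z → ℝ) z := by
  classical
  induction s using Finset.induction_on with
  | empty => simp only [Finset.sum_empty]; exact Lp.coeFn_zero ℝ 1 η
  | insert j s hj ih =>
      rw [Finset.sum_insert hj]
      filter_upwards [Lp.coeFn_add (F j) (∑ i ∈ s, F i), ih] with z h1 h2
      rw [h1]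
      simp only [Pi.add_apply, h2, Finset.sum_insert hj]

end Aux2

section Aux3

variable {Z : Type*} [MeasurableSpace Z] {η : Measure Z} [IsProbabilityMeasure η]

lemma adj_pow {Q Qs : Lp ℝ 1 η →ₗ[ℝ] Lp ℝ 1 η} (hQ : IsMarkovOp η Q) (hQs : IsMarkovOp η Qs)
    (hadj : MarkovAdjoint η Q Qs) :
    ∀ (n : ℕ) (f g : Lp ℝ 1 η) (c d : ℝ), 0 ≤ f → f ≤ c • oneL1 η → 0 ≤ g → g ≤ d • oneL1 η →
      ∫ z, ((Q ^ n) f : Z → ℝ) z * (g : Z → ℝ) z ∂η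
        = ∫ z, (f : Z → ℝ) z * ((Qs ^ n) g : Z → ℝ) z ∂η := by
  intro n
  induction n with
  | zero => intro f g c d _ _ _ _; simp
  | succ n ih =>
      intro f g c d hf0 hfc hg0 hgd
      have h1 : (Q ^ (n+1)) f = Q ((Q ^ n) f) := by rw [pow_succ']; rfl
      have h2 : (Qs ^ (n+1)) g = (Qs ^ n) (Qs g) := by rw [pow_succ]; rfl
      have hQn := markov_pow hQ n
      have hQnf0 : 0 ≤ (Q ^ n) f := hQn.1 f hf0
      have hQnfc : (Q ^ n) f ≤ c • oneL1 η := markov_bdd hQn hfc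
      have hQsg0 : 0 ≤ Qs g := hQs.1 g hg0
      have hQsgd : Qs g ≤ d • oneL1 η := markov_bdd hQs hgd
      rw [h1, h2,
        hadj ((Q ^ n) f) g (mem2_of_bdd hQnf0 hQnfc) (mem2_of_bdd hg0 hgd)]
      -- ∫ (Q^n f) * (Qs g) = ∫ f * Qs^n (Qs g)
      exact ih f (Qs g) c d hf0 hfc hQsg0 hQsgd

lemma WVW_comm {V W : Lp ℝ 1 η →ₗ[ℝ] Lp ℝ 1 η} :
    ∀ (m : ℕ) (f : Lp ℝ 1 η), W (((V ∘ₗ W) ^ m) f) = ((W ∘ₗ V) ^ m) (W f) := by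
  intro m
  induction m with
  | zero => intro f; simp
  | succ m ih =>
      intro f
      have h1 : ((V ∘ₗ W) ^ (m+1)) f = ((V ∘ₗ W) ^ m) (V (W f)) := by rw [pow_succ]; rfl
      have h2 : ((W ∘ₗ V) ^ (m+1)) (W f) = ((W ∘ₗ V) ^ m) (W (V (W f))) := by rw [pow_succ]; rfl
      rw [h1, h2, ih (V (W f))]

end Aux3

/-- Under Assumption (A2) (Q = VW, Q* = WV), Assumption (A5) and mixing of `Q`,
for all nonnegative `φ, ψ ∈ L^∞` with integral 1, the liminf of
`Σ_{j=−b}^{b} ⟨Q^{n+j}φ, Q^{n}ψ⟩` is at least `1/C`; in particular no such pair satisfies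
`limsup Σ_j ⟨Q^{n+j}φ, Q^{n}ψ⟩ < ε` with `ε < 1/C`. -/
theorem statement4
    {Z : Type*} [MeasurableSpace Z] [StandardBorelSpace Z]
    (η : Measure Z) [IsProbabilityMeasure η]
    (Q : Lp ℝ 1 η →ₗ[ℝ] Lp ℝ 1 η) (hQ : IsMarkovOp η Q)
    -- Assumption (A2)
    (V W : Lp ℝ 1 η →ₗ[ℝ] Lp ℝ 1 η)
    (hV : IsMarkovOp η V) (hW : IsMarkovOp η W)
    (hVW : Q = V ∘ₗ W) (hadj : MarkovAdjoint η Q (W ∘ₗ V))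
    -- `Q` is mixing
    (hmix : ∀ φ ψ : Lp ℝ 1 η, MemLp (φ : Z → ℝ) 2 η → MemLp (ψ : Z → ℝ) 2 η →
      Tendsto (fun n : ℕ => ∫ z, ((Q ^ n) φ : Z → ℝ) z * (ψ : Z → ℝ) z ∂η) atTop
        (𝓝 ((∫ z, (φ : Z → ℝ) z ∂η) * ∫ z, (ψ : Z → ℝ) z ∂η)))
    -- Assumption (A5), with explicit constants C, K, a, b, n₀ and operators A_n
    (C K : ℝ) (hC : 0 < C) (hK : 0 < K)
    (a b n₀ : ℕ) (hn₀ : max a b ≤ n₀)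
    (A : ℕ → Lp ℝ 1 η →ₗ[ℝ] Lp ℝ 1 η) (α : ℕ → ℝ)
    (hαnn : ∀ n, 0 ≤ α n)
    (hαsum : ∀ N : ℕ, ∑ n ∈ Finset.range N, α (n₀ + n) ≤ K)
    (hApos : ∀ n, n₀ ≤ n → ∀ φ : Lp ℝ 1 η, 0 ≤ φ → 0 ≤ A n φ)
    (hAbdd : ∀ n, n₀ ≤ n → ∀ p : ℝ≥0∞, 1 ≤ p → ∀ φ : Lp ℝ 1 η,
      eLpNorm ((A n φ : Lp ℝ 1 η) : Z → ℝ) p η ≤ ENNReal.ofReal (α n) * eLpNorm (φ : Z → ℝ) p η)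
    (hA5 : ∀ n, n₀ ≤ n → ∀ φ : Lp ℝ 1 η, 0 ≤ φ →
      W ((Q ^ (2 * n - a)) φ) ≤
        C • (∑ j ∈ Finset.range (2 * b + 1), ((W ∘ₗ V) ^ n) ((Q ^ (n - b + j)) φ)) + A n φ)
    -- the pair of functions
    (φ ψ : Lp ℝ 1 η) (hφ0 : 0 ≤ φ) (hψ0 : 0 ≤ ψ)
    (hφtop : MemLp (φ : Z → ℝ) ∞ η) (hψtop : MemLp (ψ : Z → ℝ) ∞ η)
    (hφ1 : ∫ z, (φ : Z → ℝ) z ∂η = 1) (hψ1 : ∫ z, (ψ : Z → ℝ) z ∂η = 1) :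
    1 / C ≤
      liminf (fun n : ℕ => ∑ j ∈ Finset.range (2 * b + 1),
        ∫ z, ((Q ^ (n - b + j)) φ : Z → ℝ) z * ((Q ^ n) ψ : Z → ℝ) z ∂η) atTop ∧
    ∀ ε : ℝ, ε < 1 / C →
      ¬ (limsup (fun n : ℕ => ∑ j ∈ Finset.range (2 * b + 1),
        ∫ z, ((Q ^ (n - b + j)) φ : Z → ℝ) z * ((Q ^ n) ψ : Z → ℝ) z ∂η) atTop < ε) := by
  classical
  set P : Lp ℝ 1 η →ₗ[ℝ] Lp ℝ 1 η := W ∘ₗ V with hPdef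
  have hPmk : IsMarkovOp η P := markov_comp hW hV
  obtain ⟨cφ, hcφ0, hφc⟩ := exists_bdd_of_top hφ0 hφtop
  obtain ⟨cψ, hcψ0, hψc⟩ := exists_bdd_of_top hψ0 hψtop
  set S : ℕ → ℝ := fun n : ℕ => ∑ j ∈ Finset.range (2 * b + 1),
      ∫ z, ((Q ^ (n - b + j)) φ : Z → ℝ) z * ((Q ^ n) ψ : Z → ℝ) z ∂η with hSdef
  -- basic positivity facts
  have hQφ0 : ∀ m : ℕ, 0 ≤ (Q ^ m) φ := fun m => (markov_pow hQ m).1 φ hφ0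
  have hQφc : ∀ m : ℕ, (Q ^ m) φ ≤ cφ • oneL1 η := fun m => markov_bdd (markov_pow hQ m) hφc
  have hQψ0 : ∀ m : ℕ, 0 ≤ (Q ^ m) ψ := fun m => (markov_pow hQ m).1 ψ hψ0
  -- each term of S is between 0 and cφ
  have hterm0 : ∀ n m : ℕ,
      0 ≤ ∫ z, ((Q ^ m) φ : Z → ℝ) z * ((Q ^ n) ψ : Z → ℝ) z ∂η := by
    intro n m
    refine integral_nonneg_of_ae ?_
    filter_upwards [(Lp.coeFn_nonneg _).2 (hQφ0 m), (Lp.coeFn_nonneg _).2 (hQψ0 n)] with z h1 h2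
    exact mul_nonneg h1 h2
  have hterm1 : ∀ n m : ℕ,
      ∫ z, ((Q ^ m) φ : Z → ℝ) z * ((Q ^ n) ψ : Z → ℝ) z ∂η ≤ cφ := by
    intro n m
    have hint1 : Integrable (fun z => ((Q ^ m) φ : Z → ℝ) z * ((Q ^ n) ψ : Z → ℝ) z) η := by
      have := integrable_mul_bdd ((Q ^ n) ψ) (hQφ0 m) (hQφc m)
      simpa [mul_comm] using this
    have hint2 : Integrable (fun z => cφ * ((Q ^ n) ψ : Z → ℝ) z) η :=
      (integrable_coe ((Q ^ n) ψ)).const_mul cφ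
    have hle : ∫ z, ((Q ^ m) φ : Z → ℝ) z * ((Q ^ n) ψ : Z → ℝ) z ∂η
        ≤ ∫ z, cφ * ((Q ^ n) ψ : Z → ℝ) z ∂η := by
      refine integral_mono_ae hint1 hint2 ?_
      filter_upwards [ae_bounds (hQφ0 m) (hQφc m), (Lp.coeFn_nonneg _).2 (hQψ0 n)] with z h1 h2
      exact mul_le_mul_of_nonneg_right h1.2 h2
    calc ∫ z, ((Q ^ m) φ : Z → ℝ) z * ((Q ^ n) ψ : Z → ℝ) z ∂η
        ≤ ∫ z, cφ * ((Q ^ n) ψ : Z → ℝ) z ∂η := hle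
      _ = cφ * ∫ z, ((Q ^ n) ψ : Z → ℝ) z ∂η := integral_const_mul _ _
      _ = cφ := by rw [markov_pow_integral hQ ψ n, hψ1, mul_one]
  have hS0 : ∀ n, 0 ≤ S n := fun n =>
    Finset.sum_nonneg fun j _ => hterm0 n (n - b + j)
  have hSub : ∀ n, S n ≤ ((2 * b + 1 : ℕ) : ℝ) * cφ := by
    intro n
    calc S n ≤ ∑ _j ∈ Finset.range (2 * b + 1), cφ :=
          Finset.sum_le_sum fun j _ => hterm1 n (n - b + j)
      _ = ((2 * b + 1 : ℕ) : ℝ) * cφ := by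
          rw [Finset.sum_const, Finset.card_range, nsmul_eq_mul]
  -- key adjoint identity
  have hkey : ∀ n m : ℕ,
      ∫ z, ((P ^ n) ((Q ^ m) φ) : Z → ℝ) z * (ψ : Z → ℝ) z ∂η
        = ∫ z, ((Q ^ m) φ : Z → ℝ) z * ((Q ^ n) ψ : Z → ℝ) z ∂η := by
    intro n m
    have h := adj_pow hQ hPmk hadj n ψ ((Q ^ m) φ) cψ cφ hψ0 hψc (hQφ0 m) (hQφc m)
    calc ∫ z, ((P ^ n) ((Q ^ m) φ) : Z → ℝ) z * (ψ : Z → ℝ) z ∂η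
        = ∫ z, (ψ : Z → ℝ) z * ((P ^ n) ((Q ^ m) φ) : Z → ℝ) z ∂η :=
          integral_congr_ae (Eventually.of_forall fun z => mul_comm _ _)
      _ = ∫ z, ((Q ^ n) ψ : Z → ℝ) z * ((Q ^ m) φ : Z → ℝ) z ∂η := h.symm
      _ = ∫ z, ((Q ^ m) φ : Z → ℝ) z * ((Q ^ n) ψ : Z → ℝ) z ∂η :=
          integral_congr_ae (Eventually.of_forall fun z => mul_comm _ _)
  -- the sequence t
  set t : ℕ → ℝ := fun n => ∫ z, (W ((Q ^ (2 * n - a)) φ) : Z → ℝ) z * (ψ : Z → ℝ) z ∂η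
    with htdef
  have hWφ0 : 0 ≤ W φ := hW.1 φ hφ0
  have hWφc : W φ ≤ cφ • oneL1 η := markov_bdd hW hφc
  have hteq : ∀ n : ℕ, t n = ∫ z, ((Q ^ (2 * n - a)) ψ : Z → ℝ) z * (W φ : Z → ℝ) z ∂η := by
    intro n
    have hWQ : W ((Q ^ (2 * n - a)) φ) = (P ^ (2 * n - a)) (W φ) := by
      rw [hVW]; exact WVW_comm (2 * n - a) φ
    have h := adj_pow hQ hPmk hadj (2 * n - a) ψ (W φ) cψ cφ hψ0 hψc hWφ0 hWφc
    calc t n = ∫ z, ((P ^ (2 * n - a)) (W φ) : Z → ℝ) z * (ψ : Z → ℝ) z ∂η := by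
          rw [htdef]; simp only [hWQ]
      _ = ∫ z, (ψ : Z → ℝ) z * ((P ^ (2 * n - a)) (W φ) : Z → ℝ) z ∂η :=
          integral_congr_ae (Eventually.of_forall fun z => mul_comm _ _)
      _ = ∫ z, ((Q ^ (2 * n - a)) ψ : Z → ℝ) z * (W φ : Z → ℝ) z ∂η := h.symm
  have hWφ1 : ∫ z, (W φ : Z → ℝ) z ∂η = 1 := by rw [hW.2.2, hφ1]
  have ht_tendsto : Tendsto t atTop (𝓝 1) := by
    have hmix' := hmix ψ (W φ) (mem2_of_bdd hψ0 hψc) (mem2_of_bdd hWφ0 hWφc)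
    rw [hψ1, hWφ1, one_mul] at hmix'
    have hk : Tendsto (fun n : ℕ => 2 * n - a) atTop atTop := by
      refine tendsto_atTop_mono' atTop ?_ tendsto_id
      filter_upwards [eventually_ge_atTop a] with n hn
      simp only [id_eq]
      omega
    have := hmix'.comp hk
    exact Tendsto.congr (fun n => (hteq n).symm) this
  -- the error term
  set M : ℝ := cψ * ‖φ‖ with hMdef
  have hAint : ∀ n, n₀ ≤ n → ∫ z, (A n φ : Z → ℝ) z * (ψ : Z → ℝ) z ∂η ≤ α n * M := by
    intro n hn
    have hA0 : 0 ≤ A n φ := hApos n hn φ hφ0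
    have hint1 : Integrable (fun z => (A n φ : Z → ℝ) z * (ψ : Z → ℝ) z) η :=
      integrable_mul_bdd (A n φ) hψ0 hψc
    have hint2 : Integrable (fun z => cψ * (A n φ : Z → ℝ) z) η :=
      (integrable_coe (A n φ)).const_mul cψ
    have hle : ∫ z, (A n φ : Z → ℝ) z * (ψ : Z → ℝ) z ∂η
        ≤ ∫ z, cψ * (A n φ : Z → ℝ) z ∂η := by
      refine integral_mono_ae hint1 hint2 ?_
      filter_upwards [ae_bounds hψ0 hψc, (Lp.coeFn_nonneg _).2 hA0] with z h1 h2
      calc (A n φ : Z → ℝ) z * (ψ : Z → ℝ) z ≤ (A n φ : Z → ℝ) z * cψ :=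
            mul_le_mul_of_nonneg_left h1.2 h2
        _ = cψ * (A n φ : Z → ℝ) z := mul_comm _ _
    have hnorm : ∫ z, (A n φ : Z → ℝ) z ∂η ≤ α n * ‖φ‖ := by
      have h1 : ∫ z, (A n φ : Z → ℝ) z ∂η ≤ ∫ z, ‖(A n φ : Z → ℝ) z‖ ∂η := by
        refine integral_mono (integrable_coe _) (integrable_coe _).norm ?_
        intro z; exact Real.le_norm_self _
      have h2 : ∫ z, ‖(A n φ : Z → ℝ) z‖ ∂η = ‖A n φ‖ := (L1.norm_eq_integral_norm _).symm
      have h3 : ‖A n φ‖ ≤ α n * ‖φ‖ := by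
        rw [Lp.norm_def, Lp.norm_def]
        have hb := hAbdd n hn 1 le_rfl φ
        have hfin : ENNReal.ofReal (α n) * eLpNorm (φ : Z → ℝ) 1 η ≠ ∞ :=
          ENNReal.mul_ne_top ENNReal.ofReal_ne_top (Lp.eLpNorm_lt_top φ).ne
        calc (eLpNorm ((A n φ : Lp ℝ 1 η) : Z → ℝ) 1 η).toReal
            ≤ (ENNReal.ofReal (α n) * eLpNorm (φ : Z → ℝ) 1 η).toReal :=
              ENNReal.toReal_mono hfin hb
          _ = α n * (eLpNorm (φ : Z → ℝ) 1 η).toReal := by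
              rw [ENNReal.toReal_mul, ENNReal.toReal_ofReal (hαnn n)]
      linarith [h1, h2 ▸ h1]
    calc ∫ z, (A n φ : Z → ℝ) z * (ψ : Z → ℝ) z ∂η
        ≤ ∫ z, cψ * (A n φ : Z → ℝ) z ∂η := hle
      _ = cψ * ∫ z, (A n φ : Z → ℝ) z ∂η := integral_const_mul _ _
      _ ≤ cψ * (α n * ‖φ‖) := mul_le_mul_of_nonneg_left hnorm hcψ0
      _ = α n * M := by rw [hMdef]; ring
  -- main inequality
  have hmain : ∀ n, n₀ ≤ n → t n ≤ C * S n + α n * M := by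
    intro n hn
    have hRle := hA5 n hn φ hφ0
    set R : Lp ℝ 1 η := C • (∑ j ∈ Finset.range (2 * b + 1), (P ^ n) ((Q ^ (n - b + j)) φ)) + A n φ with hRdef
    have hintF : ∀ j : ℕ, Integrable
        (fun z => ((P ^ n) ((Q ^ (n - b + j)) φ) : Z → ℝ) z * (ψ : Z → ℝ) z) η :=
      fun j => integrable_mul_bdd _ hψ0 hψc
    have hintA : Integrable (fun z => (A n φ : Z → ℝ) z * (ψ : Z → ℝ) z) η :=
      integrable_mul_bdd (A n φ) hψ0 hψc
    have hstep1 : t n ≤ ∫ z, (R : Z → ℝ) z * (ψ : Z → ℝ) z ∂η := by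
      refine integral_mono_ae (integrable_mul_bdd _ hψ0 hψc) (integrable_mul_bdd R hψ0 hψc) ?_
      filter_upwards [(Lp.coeFn_le _ _).2 hRle, (Lp.coeFn_nonneg _).2 hψ0] with z h1 h2
      exact mul_le_mul_of_nonneg_right h1 h2
    have hae : (R : Z → ℝ) =ᵐ[η]
        fun z => C * (∑ j ∈ Finset.range (2 * b + 1), ((P ^ n) ((Q ^ (n - b + j)) φ) : Z → ℝ) z)
          + (A n φ : Z → ℝ) z := by
      filter_upwards [Lp.coeFn_add
          (C • (∑ j ∈ Finset.range (2 * b + 1), (P ^ n) ((Q ^ (n - b + j)) φ))) (A n φ),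
        Lp.coeFn_smul C (∑ j ∈ Finset.range (2 * b + 1), (P ^ n) ((Q ^ (n - b + j)) φ)),
        coeFn_sum (Finset.range (2 * b + 1))
          (fun j => (P ^ n) ((Q ^ (n - b + j)) φ))] with z h1 h2 h3
      rw [hRdef, h1]
      simp only [Pi.add_apply, h2, Pi.smul_apply, smul_eq_mul, h3]
    have hstep2 : ∫ z, (R : Z → ℝ) z * (ψ : Z → ℝ) z ∂η
        = C * S n + ∫ z, (A n φ : Z → ℝ) z * (ψ : Z → ℝ) z ∂η := by
      calc ∫ z, (R : Z → ℝ) z * (ψ : Z → ℝ) z ∂η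
          = ∫ z, ((∑ j ∈ Finset.range (2 * b + 1),
                C * (((P ^ n) ((Q ^ (n - b + j)) φ) : Z → ℝ) z * (ψ : Z → ℝ) z))
              + (A n φ : Z → ℝ) z * (ψ : Z → ℝ) z) ∂η := by
            refine integral_congr_ae ?_
            filter_upwards [hae] with z h
            rw [h, add_mul, mul_assoc, Finset.sum_mul, Finset.mul_sum]
        _ = (∑ j ∈ Finset.range (2 * b + 1),
              ∫ z, C * (((P ^ n) ((Q ^ (n - b + j)) φ) : Z → ℝ) z * (ψ : Z → ℝ) z) ∂η)
              + ∫ z, (A n φ : Z → ℝ) z * (ψ : Z → ℝ) z ∂η := by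
            rw [integral_add (integrable_finset_sum _ fun j _ => (hintF j).const_mul C) hintA,
              integral_finset_sum _ fun j _ => (hintF j).const_mul C]
        _ = C * S n + ∫ z, (A n φ : Z → ℝ) z * (ψ : Z → ℝ) z ∂η := by
            congr 1
            simp only [hSdef]
            rw [Finset.mul_sum]
            refine Finset.sum_congr rfl fun j _ => ?_
            rw [integral_const_mul, hkey n (n - b + j)]
    have := hAint n hn
    calc t n ≤ ∫ z, (R : Z → ℝ) z * (ψ : Z → ℝ) z ∂η := hstep1
      _ = C * S n + ∫ z, (A n φ : Z → ℝ) z * (ψ : Z → ℝ) z ∂η := hstep2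
      _ ≤ C * S n + α n * M := by linarith
  -- α tends to zero
  have hα0 : Tendsto α atTop (𝓝 0) := by
    have hsum : Summable (fun n => α (n₀ + n)) :=
      summable_of_sum_range_le (fun n => hαnn _) hαsum
    have h1 : Tendsto (fun n => α (n₀ + n)) atTop (𝓝 0) := hsum.tendsto_atTop_zero
    have h2 : Tendsto (fun n => α (n + n₀)) atTop (𝓝 0) := by
      refine h1.congr fun n => by rw [add_comm]
    exact (tendsto_add_atTop_iff_nat n₀).1 h2
  -- auxiliary converging sequence
  set u : ℕ → ℝ := fun n => (t n - α n * M) / C with hudef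
  have hu : Tendsto u atTop (𝓝 (1 / C)) := by
    have : Tendsto (fun n => (t n - α n * M)) atTop (𝓝 (1 - 0 * M)) :=
      ht_tendsto.sub (hα0.mul_const M)
    rw [zero_mul, sub_zero] at this
    exact this.div_const C
  have hev : ∀ᶠ n in atTop, u n ≤ S n := by
    filter_upwards [eventually_ge_atTop n₀] with n hn
    have := hmain n hn
    simp only [hudef]
    rw [div_le_iff₀ hC]
    nlinarith [hS0 n]
  have hliminf : 1 / C ≤ liminf S atTop := by
    have h1 : liminf u atTop = 1 / C := hu.liminf_eq
    have h2 : liminf u atTop ≤ liminf S atTop :=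
      liminf_le_liminf hev (hu.isBoundedUnder_ge)
        (isCoboundedUnder_ge_of_le atTop (fun n => hSub n))
    linarith
  refine ⟨hliminf, ?_⟩
  intro ε hε hlt
  have hls : liminf S atTop ≤ limsup S atTop :=
    liminf_le_limsup (isBoundedUnder_of ⟨((2 * b + 1 : ℕ) : ℝ) * cφ, fun n => hSub n⟩)
      (isBoundedUnder_of ⟨0, fun n => hS0 n⟩)
  have : (1 : ℝ) / C < 1 / C := lt_of_le_of_lt (hliminf.trans (hls.trans hlt.le)) hε
  exact lt_irrefl _ this
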